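/- Fix a real exponent s > 2 and m₁ ∈ (0,1), and define g(θ) = m₁ f_s(θ) + (1−m₁) f_s(θ − π). Then g has exactly one zero in the open interval (0, π) and exactly one zero in the open interval (π, 2π). -/

import Mathlib

open Real Set

/-- `f_s(θ) = sin(θ)·(2^{-s}|sin(θ/2)|^{-s} − 1)`, the coorbital kernel function
for a homogeneous potential with exponent `s`. -/
noncomputable def coorbitalF (s θ : ℝ) : ℝ :=
  Real.sin θ * ((2 : ℝ) ^ (-s) * |Real.sin (θ / 2)| ^ (-s) - 1)

private lemma rpow_neg_lt_rpow_neg {s a b : ℝ} (hs : 0 < s) (ha : 0 < a) (hab : a < b) :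
    b ^ (-s) < a ^ (-s) := by
  have hb : 0 < b := ha.trans hab
  rw [Real.rpow_neg ha.le, Real.rpow_neg hb.le]
  exact inv_strictAnti₀ (Real.rpow_pos_of_pos ha s) (Real.rpow_lt_rpow ha.le hab hs)

private lemma one_lt_sqrt_two : (1:ℝ) < Real.sqrt 2 := by
  rw [show (1:ℝ) = Real.sqrt 1 by simp]
  exact Real.sqrt_lt_sqrt (by norm_num) (by norm_num)

/-- Fix `s > 2` and `m₁ ∈ (0,1)`, and let `g(θ) = m₁ f_s(θ) + (1−m₁) f_s(θ − π)`.
Then `g` has exactly one zero in the open interval `(0, π)` and exactly one zero in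
the open interval `(π, 2π)`. -/
theorem one_plus_two_plus_one_euler_case (s m₁ : ℝ) (hs : 2 < s)
    (hm₁ : m₁ ∈ Set.Ioo (0 : ℝ) 1) (g : ℝ → ℝ)
    (hg : g = fun θ => m₁ * coorbitalF s θ + (1 - m₁) * coorbitalF s (θ - π)) :
    (∃! θ, θ ∈ Set.Ioo 0 π ∧ g θ = 0) ∧
    (∃! θ, θ ∈ Set.Ioo π (2 * π) ∧ g θ = 0) := by
  obtain ⟨hm0, hm1⟩ := hm₁
  have hm1' : 0 < 1 - m₁ := by linarith
  have hs0 : 0 < s := by linarith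
  have hπ : (0:ℝ) < π := Real.pi_pos
  set c : ℝ := (2:ℝ) ^ (-s) with hc
  have hcpos : 0 < c := Real.rpow_pos_of_pos two_pos _
  set φ : ℝ → ℝ := fun θ =>
    m₁ * (c * (Real.sin (θ/2)) ^ (-s) - 1) - (1 - m₁) * (c * (Real.cos (θ/2)) ^ (-s) - 1)
    with hφdef
  -- factorization of g on (0, π)
  have hfact : ∀ θ ∈ Ioo (0:ℝ) π, g θ = Real.sin θ * φ θ := by
    intro θ hθ
    obtain ⟨h0, h1⟩ := hθ
    have hsin2 : 0 < Real.sin (θ/2) :=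
      Real.sin_pos_of_pos_of_lt_pi (by linarith) (by linarith)
    have hcos2 : 0 < Real.cos (θ/2) :=
      Real.cos_pos_of_mem_Ioo ⟨by linarith, by linarith⟩
    rw [hg]
    simp only [coorbitalF]
    rw [abs_of_pos hsin2, Real.sin_sub_pi]
    have e : (θ - π)/2 = θ/2 - π/2 := by ring
    rw [e, Real.sin_sub_pi_div_two, abs_neg, abs_of_pos hcos2, hφdef]
    ring
  -- φ is strictly decreasing on (0, π)
  have hanti : StrictAntiOn φ (Ioo 0 π) := by
    intro a ha b hb hab
    obtain ⟨ha0, ha1⟩ := ha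
    obtain ⟨hb0, hb1⟩ := hb
    have hsa : 0 < Real.sin (a/2) :=
      Real.sin_pos_of_pos_of_lt_pi (by linarith) (by linarith)
    have hca : 0 < Real.cos (a/2) :=
      Real.cos_pos_of_mem_Ioo ⟨by linarith, by linarith⟩
    have hcb : 0 < Real.cos (b/2) :=
      Real.cos_pos_of_mem_Ioo ⟨by linarith, by linarith⟩
    have hsinlt : Real.sin (a/2) < Real.sin (b/2) :=
      Real.strictMonoOn_sin ⟨by linarith, by linarith⟩ ⟨by linarith, by linarith⟩
        (by linarith)
    have hcoslt : Real.cos (b/2) < Real.cos (a/2) :=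
      Real.strictAntiOn_cos ⟨by linarith, by linarith⟩ ⟨by linarith, by linarith⟩
        (by linarith)
    have h1 : Real.sin (b/2) ^ (-s) < Real.sin (a/2) ^ (-s) :=
      rpow_neg_lt_rpow_neg hs0 hsa hsinlt
    have h2 : Real.cos (a/2) ^ (-s) < Real.cos (b/2) ^ (-s) :=
      rpow_neg_lt_rpow_neg hs0 hcb hcoslt
    have k1 : m₁ * (c * Real.sin (b/2) ^ (-s)) < m₁ * (c * Real.sin (a/2) ^ (-s)) :=
      mul_lt_mul_of_pos_left (mul_lt_mul_of_pos_left h1 hcpos) hm0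
    have k2 : (1 - m₁) * (c * Real.cos (a/2) ^ (-s)) < (1 - m₁) * (c * Real.cos (b/2) ^ (-s)) :=
      mul_lt_mul_of_pos_left (mul_lt_mul_of_pos_left h2 hcpos) hm1'
    simp only [hφdef]
    nlinarith [k1, k2]
  -- φ is continuous on [π/6, 5π/6]
  have hcont : ContinuousOn φ (Icc (π/6) (5*π/6)) := by
    have hsinne : ∀ x ∈ Icc (π/6) (5*π/6), Real.sin (x/2) ≠ 0 ∨ (0:ℝ) ≤ -s := by
      intro x hx
      exact Or.inl (ne_of_gt (Real.sin_pos_of_pos_of_lt_pi (by linarith [hx.1]) (by linarith [hx.2])))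
    have hcosne : ∀ x ∈ Icc (π/6) (5*π/6), Real.cos (x/2) ≠ 0 ∨ (0:ℝ) ≤ -s := by
      intro x hx
      exact Or.inl (ne_of_gt (Real.cos_pos_of_mem_Ioo ⟨by linarith [hx.1], by linarith [hx.2]⟩))
    have c1 : ContinuousOn (fun x : ℝ => Real.sin (x/2)) (Icc (π/6) (5*π/6)) :=
      (Real.continuous_sin.comp (continuous_id.div_const 2)).continuousOn
    have c2 : ContinuousOn (fun x : ℝ => Real.cos (x/2)) (Icc (π/6) (5*π/6)) :=
      (Real.continuous_cos.comp (continuous_id.div_const 2)).continuousOn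
    simp only [hφdef]
    exact (continuousOn_const.mul ((continuousOn_const.mul (c1.rpow_const hsinne)).sub
      continuousOn_const)).sub (continuousOn_const.mul
      ((continuousOn_const.mul (c2.rpow_const hcosne)).sub continuousOn_const))
  -- φ(π/6) > 0
  have hpos : 0 < φ (π/6) := by
    have e1 : (π/6)/2 = π/12 := by ring
    have hs12 : 0 < Real.sin (π/12) :=
      Real.sin_pos_of_pos_of_lt_pi (by linarith) (by linarith)
    have hlt : Real.sin (π/12) < 1/2 := by
      have h1 := Real.sin_lt (show (0:ℝ) < π/12 by linarith)
      have h2 : π < 6 := by linarith [Real.pi_lt_d2]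
      linarith
    have hA : 1 < c * Real.sin (π/12) ^ (-s) := by
      have h1 : (1/2 : ℝ) ^ (-s) < Real.sin (π/12) ^ (-s) :=
        rpow_neg_lt_rpow_neg hs0 hs12 hlt
      have h2 : c * (1/2 : ℝ) ^ (-s) = 1 := by
        rw [hc, ← Real.mul_rpow (by norm_num) (by norm_num)]
        norm_num
      calc (1:ℝ) = c * (1/2:ℝ)^(-s) := h2.symm
        _ < c * Real.sin (π/12) ^ (-s) := by
            exact mul_lt_mul_of_pos_left h1 hcpos
    have hcoslt : Real.sqrt 2 / 2 < Real.cos (π/12) := by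
      have h := Real.strictAntiOn_cos (show (π/12:ℝ) ∈ Icc 0 π from ⟨by linarith, by linarith⟩)
        (show (π/4:ℝ) ∈ Icc 0 π from ⟨by linarith, by linarith⟩) (by linarith)
      rw [Real.cos_pi_div_four] at h
      linarith
    have hB : c * Real.cos (π/12) ^ (-s) < 1 := by
      have hsq : (0:ℝ) < Real.sqrt 2 / 2 := by positivity
      have h1 : Real.cos (π/12) ^ (-s) < (Real.sqrt 2 / 2) ^ (-s) :=
        rpow_neg_lt_rpow_neg hs0 hsq hcoslt
      have h2 : c * (Real.sqrt 2 / 2) ^ (-s) = (Real.sqrt 2) ^ (-s) := by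
        rw [hc, ← Real.mul_rpow (by norm_num) hsq.le,
          show (2:ℝ) * (Real.sqrt 2 / 2) = Real.sqrt 2 from by ring]
      have h3 : (Real.sqrt 2 : ℝ) ^ (-s) < 1 :=
        Real.rpow_lt_one_of_one_lt_of_neg _root_.one_lt_sqrt_two (by linarith)
      calc c * Real.cos (π/12) ^ (-s) < c * (Real.sqrt 2 / 2) ^ (-s) :=
            mul_lt_mul_of_pos_left h1 hcpos
        _ = (Real.sqrt 2) ^ (-s) := h2
        _ < 1 := h3
    have t1 : 0 < m₁ * (c * Real.sin (π/12) ^ (-s) - 1) := mul_pos hm0 (by linarith)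
    have t2 : (1 - m₁) * (c * Real.cos (π/12) ^ (-s) - 1) < 0 :=
      mul_neg_of_pos_of_neg hm1' (by linarith)
    simp only [hφdef, e1]
    linarith
  -- φ(5π/6) < 0
  have hneg : φ (5*π/6) < 0 := by
    have e1 : (5*π/6)/2 = 5*π/12 := by ring
    have hsinlt : Real.sqrt 2 / 2 < Real.sin (5*π/12) := by
      have h := Real.strictMonoOn_sin
        (show (π/4:ℝ) ∈ Icc (-(π/2)) (π/2) from ⟨by linarith, by linarith⟩)
        (show (5*π/12:ℝ) ∈ Icc (-(π/2)) (π/2) from ⟨by linarith, by linarith⟩) (by linarith)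
      rw [Real.sin_pi_div_four] at h
      linarith
    have hcoslt : Real.cos (5*π/12) < 1/2 := by
      have h := Real.strictAntiOn_cos (show (π/3:ℝ) ∈ Icc 0 π from ⟨by linarith, by linarith⟩)
        (show (5*π/12:ℝ) ∈ Icc 0 π from ⟨by linarith, by linarith⟩) (by linarith)
      rw [Real.cos_pi_div_three] at h
      linarith
    have hcospos : 0 < Real.cos (5*π/12) :=
      Real.cos_pos_of_mem_Ioo ⟨by linarith, by linarith⟩
    have hA : c * Real.sin (5*π/12) ^ (-s) < 1 := by
      have hsq : (0:ℝ) < Real.sqrt 2 / 2 := by positivity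
      have h1 : Real.sin (5*π/12) ^ (-s) < (Real.sqrt 2 / 2) ^ (-s) :=
        rpow_neg_lt_rpow_neg hs0 hsq hsinlt
      have h2 : c * (Real.sqrt 2 / 2) ^ (-s) = (Real.sqrt 2) ^ (-s) := by
        rw [hc, ← Real.mul_rpow (by norm_num) hsq.le,
          show (2:ℝ) * (Real.sqrt 2 / 2) = Real.sqrt 2 from by ring]
      have h3 : (Real.sqrt 2 : ℝ) ^ (-s) < 1 :=
        Real.rpow_lt_one_of_one_lt_of_neg _root_.one_lt_sqrt_two (by linarith)
      calc c * Real.sin (5*π/12) ^ (-s) < c * (Real.sqrt 2 / 2) ^ (-s) :=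
            mul_lt_mul_of_pos_left h1 hcpos
        _ = (Real.sqrt 2) ^ (-s) := h2
        _ < 1 := h3
    have hB : 1 < c * Real.cos (5*π/12) ^ (-s) := by
      have h1 : (1/2 : ℝ) ^ (-s) < Real.cos (5*π/12) ^ (-s) :=
        rpow_neg_lt_rpow_neg hs0 hcospos hcoslt
      have h2 : c * (1/2 : ℝ) ^ (-s) = 1 := by
        rw [hc, ← Real.mul_rpow (by norm_num) (by norm_num)]
        norm_num
      calc (1:ℝ) = c * (1/2:ℝ)^(-s) := h2.symm
        _ < c * Real.cos (5*π/12) ^ (-s) := mul_lt_mul_of_pos_left h1 hcpos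
    have t1 : m₁ * (c * Real.sin (5*π/12) ^ (-s) - 1) < 0 :=
      mul_neg_of_pos_of_neg hm0 (by linarith)
    have t2 : 0 < (1 - m₁) * (c * Real.cos (5*π/12) ^ (-s) - 1) := mul_pos hm1' (by linarith)
    simp only [hφdef, e1]
    linarith
  -- intermediate value theorem gives a zero of φ
  have hab : (π/6 : ℝ) ≤ 5*π/6 := by linarith
  have h0mem : (0:ℝ) ∈ Ioo (φ (5*π/6)) (φ (π/6)) := ⟨hneg, hpos⟩
  obtain ⟨θ₀, hθ₀mem, hθ₀val⟩ := intermediate_value_Ioo' hab hcont h0mem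
  have hθ₀Ioo : θ₀ ∈ Ioo (0:ℝ) π := ⟨by linarith [hθ₀mem.1], by linarith [hθ₀mem.2]⟩
  have hgθ₀ : g θ₀ = 0 := by rw [hfact θ₀ hθ₀Ioo, hθ₀val, mul_zero]
  -- uniqueness on (0, π)
  have huniq : ∀ θ ∈ Ioo (0:ℝ) π, g θ = 0 → θ = θ₀ := by
    intro θ hθ hgθ
    have hsθ : Real.sin θ ≠ 0 :=
      ne_of_gt (Real.sin_pos_of_pos_of_lt_pi hθ.1 hθ.2)
    have hφθ : φ θ = 0 := by
      have := hfact θ hθ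
      rw [hgθ] at this
      rcases mul_eq_zero.1 this.symm with h | h
      · exact absurd h hsθ
      · exact h
    exact hanti.injOn hθ hθ₀Ioo (by rw [hφθ, hθ₀val])
  have part1 : ∃! θ, θ ∈ Set.Ioo 0 π ∧ g θ = 0 :=
    ⟨θ₀, ⟨hθ₀Ioo, hgθ₀⟩, fun θ h => huniq θ h.1 h.2⟩
  -- symmetry: g (2π − θ) = −g θ
  have hsym : ∀ θ, g (2*π - θ) = - g θ := by
    intro θ
    rw [hg]
    simp only
    have h1 : coorbitalF s (2*π - θ) = - coorbitalF s θ := by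
      unfold coorbitalF
      have e : (2*π - θ)/2 = π - θ/2 := by ring
      rw [e, Real.sin_pi_sub, Real.sin_two_pi_sub]
      ring
    have h2 : coorbitalF s (2*π - θ - π) = - coorbitalF s (θ - π) := by
      have e0 : 2*π - θ - π = -(θ - π) := by ring
      rw [e0]
      unfold coorbitalF
      rw [Real.sin_neg, neg_div, Real.sin_neg, abs_neg]
      ring
    rw [h1, h2]
    ring
  refine ⟨part1, ⟨2*π - θ₀, ⟨⟨by linarith [hθ₀Ioo.2], by linarith [hθ₀Ioo.1]⟩, ?_⟩, ?_⟩⟩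
  · rw [hsym θ₀, hgθ₀, neg_zero]
  · rintro θ ⟨⟨hθ1, hθ2⟩, hgθ⟩
    have h1 : 2*π - θ ∈ Ioo (0:ℝ) π := ⟨by linarith, by linarith⟩
    have h2 : g (2*π - θ) = 0 := by rw [hsym θ, hgθ, neg_zero]
    have := huniq _ h1 h2
    linarith
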